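/- Let P = {P_x} be a POVM, γ a state, and {X_y}_{y∈Y} a partition of X_+ = {x : P_x ≠ 0}. Define Q_y = Σ_{x∈X_y} P_x. Then {Q_y} is a PVM all of whose elements commute with γ if and only if the partition is γ-disconnected, i.e., for all y ≠ y', x ∈ X_y, x' ∈ X_{y'}: P_x P_{x'} = 0 and P_x γ P_{x'} = 0. -/

import Mathlib

open Matrix BigOperators Filter
open scoped ComplexOrder Kronecker Classical

abbrev Mat (d : ℕ) := Matrix (Fin d) (Fin d) ℂ

def IsPOVM {X : Type*} [Fintype X] {d : ℕ} (P : X → Mat d) : Prop :=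
  (∀ x, (P x).PosSemidef) ∧ ∑ x, P x = 1

def IsPVM {X : Type*} [Fintype X] {d : ℕ} (P : X → Mat d) : Prop :=
  IsPOVM P ∧ (∀ x, P x * P x = P x) ∧ ∀ x y, x ≠ y → P x * P y = 0

def IsDensity {d : ℕ} (ρ : Mat d) : Prop := ρ.PosSemidef ∧ ρ.trace = 1

/-- `Q ⪯ P`: `Q` is a classical post-processing of `P`. -/
def IsPostProcessingOf {Y X : Type*} [Fintype Y] [Fintype X] {d : ℕ}
    (Q : Y → Mat d) (P : X → Mat d) : Prop :=
  ∃ p : X → Y → ℝ, (∀ x y, 0 ≤ p x y) ∧ (∀ x, ∑ y, p x y = 1) ∧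
    ∀ y, Q y = ∑ x, (p x y : ℂ) • P x

lemma psd_sum {X : Type*} {d : ℕ} (s : Finset X) (f : X → Mat d)
    (h : ∀ x ∈ s, (f x).PosSemidef) : (∑ x ∈ s, f x).PosSemidef :=
  Finset.sum_induction f _ (fun _ _ ha hb => ha.add hb) Matrix.PosSemidef.zero h

lemma psd_add_eq_zero {d : ℕ} {A B : Mat d} (hA : A.PosSemidef) (hB : B.PosSemidef)
    (h : A + B = 0) : A = 0 := by
  have hBA : B = -A := eq_neg_of_add_eq_zero_right h
  have hv : ∀ v, A *ᵥ v = 0 := by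
    intro v
    rw [← hA.dotProduct_mulVec_zero_iff]
    have h1 := hA.dotProduct_mulVec_nonneg v
    have h2 := hB.dotProduct_mulVec_nonneg v
    rw [hBA] at h2
    simp only [neg_mulVec, dotProduct_neg] at h2
    exact le_antisymm (neg_nonneg.mp h2) h1
  ext i j
  have := congrFun (hv (Pi.single j 1)) i
  simpa [mulVec_single] using this

open scoped MatrixOrder in
lemma psd_conj_zero {d : ℕ} {A M : Mat d} (hA : A.PosSemidef)
    (h : Mᴴ * A * M = 0) : A * M = 0 := by
  have hs := CFC.sqrt_mul_sqrt_self A hA.nonneg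
  have hh : (CFC.sqrt A).IsHermitian := (CFC.sqrt_nonneg A).posSemidef.isHermitian
  have : ((CFC.sqrt A) * M)ᴴ * ((CFC.sqrt A) * M) = 0 := by
    rw [conjTranspose_mul, hh.eq]
    calc Mᴴ * (CFC.sqrt A) * ((CFC.sqrt A) * M) = Mᴴ * ((CFC.sqrt A) * (CFC.sqrt A)) * M := by noncomm_ring
    _ = 0 := by rw [hs]; exact h
  have h0 : (CFC.sqrt A) * M = 0 := conjTranspose_mul_self_eq_zero.mp this
  calc A * M = (CFC.sqrt A) * ((CFC.sqrt A) * M) := by rw [← mul_assoc, hs]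
  _ = 0 := by rw [h0, mul_zero]

/-- the grouping `Q_y = ∑_{x ∈ X_y} P_x` along a partition of `X₊`
is a PVM all of whose elements commute with `γ` iff the partition is
γ-disconnected. -/
theorem grouping_pvm_commuting_iff_disconnected {X Y : Type*} [Fintype X] [Fintype Y]
    [DecidableEq X] {d : ℕ} (P : X → Mat d) (γ : Mat d)
    (hP : IsPOVM P) (hγ : IsDensity γ)
    (Xp : Y → Finset X)
    (hdisj : ∀ y y', y ≠ y' → Disjoint (Xp y) (Xp y'))
    (hcover : Finset.univ.biUnion Xp = Finset.univ.filter (fun x => P x ≠ 0)) :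
    (IsPVM (fun y => ∑ x ∈ Xp y, P x) ∧
      ∀ y, (∑ x ∈ Xp y, P x) * γ = γ * (∑ x ∈ Xp y, P x)) ↔
    (∀ y y', y ≠ y' → ∀ x ∈ Xp y, ∀ x' ∈ Xp y', P x * P x' = 0 ∧ P x * γ * P x' = 0) := by
  classical
  set Q : Y → Mat d := fun y => ∑ x ∈ Xp y, P x with hQ
  have hQy : ∀ y, ∑ x ∈ Xp y, P x = Q y := fun _ => rfl
  simp only [hQy]
  have hQpsd : ∀ y, (Q y).PosSemidef := fun y => psd_sum _ _ (fun x _ => hP.1 x)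
  have hQherm : ∀ y, (Q y).IsHermitian := fun y => (hQpsd y).isHermitian
  have hsumQ : ∑ y, Q y = 1 := by
    have hpd : (↑(Finset.univ : Finset Y) : Set Y).PairwiseDisjoint Xp :=
      fun y _ y' _ hne => hdisj y y' hne
    have h1 : ∑ y, Q y = ∑ x ∈ Finset.univ.biUnion Xp, P x := (Finset.sum_biUnion hpd).symm
    rw [h1, hcover, Finset.sum_filter_ne_zero, hP.2]
  constructor
  · rintro ⟨⟨hpovm, hidem, horth⟩, hcomm⟩
    have hkey : ∀ y, ∀ x ∈ Xp y, P x * Q y = P x := by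
      intro y x hx
      have hR : (Q y - P x).PosSemidef := by
        have hQsplit : Q y = P x + ∑ x' ∈ (Xp y).erase x, P x' :=
          (Finset.add_sum_erase _ _ hx).symm
        rw [hQsplit, add_sub_cancel_left]
        exact psd_sum _ _ fun x' _ => hP.1 x'
      have hQM : Q y * (1 - Q y) = 0 := by rw [mul_sub, mul_one, hidem y, sub_self]
      have hzero : (1 - Q y)ᴴ * P x * (1 - Q y) + (1 - Q y)ᴴ * (Q y - P x) * (1 - Q y) = 0 := by
        have he : (1 - Q y)ᴴ * P x * (1 - Q y) + (1 - Q y)ᴴ * (Q y - P x) * (1 - Q y)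
            = (1 - Q y)ᴴ * (Q y * (1 - Q y)) := by noncomm_ring
        rw [he, hQM, mul_zero]
      have h1 := psd_add_eq_zero ((hP.1 x).conjTranspose_mul_mul_same _)
        (hR.conjTranspose_mul_mul_same _) hzero
      have h2 : P x * (1 - Q y) = 0 := psd_conj_zero (hP.1 x) h1
      rw [mul_sub, mul_one, sub_eq_zero] at h2
      exact h2.symm
    have hkey' : ∀ y, ∀ x ∈ Xp y, Q y * P x = P x := by
      intro y x hx
      have := congrArg conjTranspose (hkey y x hx)
      rwa [conjTranspose_mul, (hP.1 x).isHermitian.eq, (hQherm y).eq] at this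
    intro y y' hyy x hx x' hx'
    have hQQ : Q y * Q y' = 0 := horth y y' hyy
    constructor
    · calc P x * P x' = (P x * Q y) * (Q y' * P x') := by rw [hkey y x hx, hkey' y' x' hx']
      _ = P x * (Q y * Q y') * P x' := by noncomm_ring
      _ = 0 := by rw [hQQ, mul_zero, zero_mul]
    · calc P x * γ * P x' = (P x * Q y) * γ * (Q y' * P x') := by
            rw [hkey y x hx, hkey' y' x' hx']
      _ = P x * (Q y * γ) * (Q y' * P x') := by noncomm_ring
      _ = P x * (γ * Q y) * (Q y' * P x') := by rw [hcomm y]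
      _ = P x * γ * (Q y * Q y') * P x' := by noncomm_ring
      _ = 0 := by rw [hQQ, mul_zero, zero_mul]
  · intro h
    have horth : ∀ y y', y ≠ y' → Q y * Q y' = 0 := by
      intro y y' hyy
      show (∑ x ∈ Xp y, P x) * ∑ x' ∈ Xp y', P x' = 0
      rw [Finset.sum_mul_sum]
      exact Finset.sum_eq_zero fun x hx =>
        Finset.sum_eq_zero fun x' hx' => (h y y' hyy x hx x' hx').1
    have hidem : ∀ y, Q y * Q y = Q y := by
      intro y
      calc Q y * Q y = ∑ y', Q y * Q y' := (Finset.sum_eq_single_of_mem y (Finset.mem_univ y)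
            (fun y' _ hy' => horth y y' (Ne.symm hy'))).symm
      _ = Q y * ∑ y', Q y' := (Finset.mul_sum _ _ _).symm
      _ = Q y := by rw [hsumQ, mul_one]
    have hcross : ∀ y y', y ≠ y' → Q y * γ * Q y' = 0 := by
      intro y y' hyy
      show (∑ x ∈ Xp y, P x) * γ * ∑ x' ∈ Xp y', P x' = 0
      rw [Finset.sum_mul, Finset.sum_mul]
      refine Finset.sum_eq_zero fun x hx => ?_
      rw [Finset.mul_sum]
      exact Finset.sum_eq_zero fun x' hx' => (h y y' hyy x hx x' hx').2
    have hγ : ∑ y, Q y * γ * Q y = γ := by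
      calc ∑ y, Q y * γ * Q y = ∑ y, ∑ y', Q y * γ * Q y' := by
            refine Finset.sum_congr rfl fun y _ => (Finset.sum_eq_single_of_mem y
              (Finset.mem_univ y) (fun y' _ hy' => hcross y y' (Ne.symm hy'))).symm
      _ = ∑ y, (Q y * γ) * ∑ y', Q y' := by
            refine Finset.sum_congr rfl fun y _ => (Finset.mul_sum _ _ _).symm
      _ = ((∑ y, Q y) * γ) * ∑ y', Q y' := by
            have hstep : ((∑ y, Q y) * γ) * ∑ y', Q y'
                = ∑ y, (Q y * γ) * ∑ y', Q y' := by rw [Finset.sum_mul, Finset.sum_mul]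
            rw [hstep]
      _ = γ := by rw [hsumQ, one_mul, mul_one]
    have hcomm : ∀ y, Q y * γ = γ * Q y := by
      intro y
      have hl : Q y * γ = Q y * γ * Q y := by
        conv_lhs => rw [← hγ]
        rw [Finset.mul_sum]
        rw [Finset.sum_eq_single_of_mem y (Finset.mem_univ y) (fun y' _ hy' => by
          rw [show Q y * (Q y' * γ * Q y') = (Q y * Q y') * (γ * Q y') by noncomm_ring,
            horth y y' (Ne.symm hy'), zero_mul])]
        rw [show Q y * (Q y * γ * Q y) = (Q y * Q y) * γ * Q y by noncomm_ring, hidem y]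
      have hr : γ * Q y = Q y * γ * Q y := by
        conv_lhs => rw [← hγ]
        rw [Finset.sum_mul]
        rw [Finset.sum_eq_single_of_mem y (Finset.mem_univ y) (fun y' _ hy' => by
          rw [show Q y' * γ * Q y' * Q y = (Q y' * γ) * (Q y' * Q y) by noncomm_ring,
            horth y' y hy', mul_zero])]
        rw [show Q y * γ * Q y * Q y = Q y * γ * (Q y * Q y) by noncomm_ring, hidem y]
      rw [hl, hr]
    exact ⟨⟨⟨hQpsd, hsumQ⟩, hidem, horth⟩, hcomm⟩
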